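/- Let (x_n) be a strictly increasing sequence of positive reals with x_{n+1} - x_n ≥ c·n^{-(1-η)} for some c > 0 and η ∈ (0,1]. Then for every ε > 0, the number of triples (m, n₁, n₂) with 1 ≤ m ≤ N^{1+ε}, 1 ≤ n₁ < n₂ ≤ N and m(x_{n₂} - x_{n₁}) < N^ε is ≪ N^{2-η+2ε}, with implied constant depending on c, η, ε. -/

import Mathlib

open Finset

set_option maxHeartbeats 1000000 in
/-- First Rudnick–Technau counting condition under a polynomial gap lower bound:
the number of triples `(m, n₁, n₂)` with `1 ≤ m ≤ N^{1+ε}`, `1 ≤ n₁ < n₂ ≤ N` and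
`m(x_{n₂} - x_{n₁}) < N^ε` is `≪ N^{2-η+2ε}`. -/
theorem stmt10 (x : ℕ → ℝ) (c η ε : ℝ) (hc : 0 < c) (hη0 : 0 < η) (hη1 : η ≤ 1)
    (hε : 0 < ε) (hpos : ∀ n ≥ 1, 0 < x n) (hmono : ∀ n ≥ 1, x n < x (n + 1))
    (hgap : ∀ n : ℕ, 1 ≤ n → c * (n : ℝ) ^ (-(1 - η)) ≤ x (n + 1) - x n) :
    ∃ C > (0 : ℝ), ∀ N : ℕ,
      (((Finset.Icc 1 (Nat.floor ((N : ℝ) ^ (1 + ε))) ×ˢ (Finset.Icc 1 N ×ˢ Finset.Icc 1 N)).filter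
          (fun t => t.2.1 < t.2.2 ∧ (t.1 : ℝ) * (x t.2.2 - x t.2.1) < (N : ℝ) ^ ε)).card : ℝ)
        ≤ C * (N : ℝ) ^ (2 - η + 2 * ε) := by
  refine ⟨(1 + (1 + ε) / ε) / c, by positivity, fun N => ?_⟩
  rcases Nat.eq_zero_or_pos N with h0 | hN
  · subst h0
    simp only [Icc_self, Nat.Icc_eq_range', Nat.cast_zero]
    norm_num
    positivity
  have hNpos : (0 : ℝ) < N := by exact_mod_cast hN
  have hN1 : (1 : ℝ) ≤ N := by exact_mod_cast hN
  have hexp : -(1 - η) ≤ 0 := by linarith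
  set M := Nat.floor ((N : ℝ) ^ (1 + ε)) with hM
  -- telescoped gap bound
  have key : ∀ d a : ℕ, 1 ≤ a → a + d ≤ N →
      c * d * (N : ℝ) ^ (-(1 - η)) ≤ x (a + d) - x a := by
    intro d
    induction d with
    | zero => intro a _ _; simp
    | succ d ih =>
      intro a ha hle
      have h2 := ih a ha (by omega)
      have hg := hgap (a + d) (by omega)
      have hadpos : (0 : ℝ) < ((a + d : ℕ) : ℝ) := by
        exact_mod_cast Nat.pos_of_ne_zero (by omega)
      have hb : (N : ℝ) ^ (-(1 - η)) ≤ ((a + d : ℕ) : ℝ) ^ (-(1 - η)) :=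
        Real.rpow_le_rpow_of_nonpos hadpos (by exact_mod_cast (by omega : a + d ≤ N)) hexp
      have hg' : c * (N : ℝ) ^ (-(1 - η)) ≤ x (a + d + 1) - x (a + d) :=
        le_trans (mul_le_mul_of_nonneg_left hb hc.le) hg
      have hx : x (a + (d + 1)) = x (a + d + 1) := by ring_nf
      push_cast
      rw [show a + (d + 1) = (a + d) + 1 from rfl]
      nlinarith [h2, hg']
  -- per-m fiber bound
  have hT : (0 : ℝ) < (N : ℝ) ^ (-(1 - η)) := Real.rpow_pos_of_pos hNpos _
  have fib : ∀ m : ℕ, m ∈ Icc 1 M →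
      (((Icc 1 N ×ˢ Icc 1 N).filter
        (fun p : ℕ × ℕ => p.1 < p.2 ∧ (m : ℝ) * (x p.2 - x p.1) < (N : ℝ) ^ ε)).card : ℝ)
      ≤ (N : ℝ) * ((N : ℝ) ^ (1 - η + ε) / (c * m)) := by
    intro m hm
    have hm1 : 1 ≤ m := (mem_Icc.mp hm).1
    have hmR : (1 : ℝ) ≤ (m : ℝ) := by exact_mod_cast hm1
    have hcm : (0 : ℝ) < c * m := by positivity
    set B : ℝ := (N : ℝ) ^ (1 - η + ε) / (c * m) with hB
    have hBnn : 0 ≤ B := by positivity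
    have hsub : ((Icc 1 N ×ˢ Icc 1 N).filter
        (fun p : ℕ × ℕ => p.1 < p.2 ∧ (m : ℝ) * (x p.2 - x p.1) < (N : ℝ) ^ ε)).card
        ≤ (Icc 1 N ×ˢ Icc 1 (Nat.floor B)).card := by
      apply Finset.card_le_card_of_injOn (fun p => (p.1, p.2 - p.1))
      · intro p hp
        simp only [mem_coe, mem_filter, mem_product, mem_Icc] at hp ⊢
        obtain ⟨⟨⟨h11, h12⟩, ⟨h21, h22⟩⟩, hlt, hsm⟩ := hp
        refine ⟨⟨h11, h12⟩, by omega, ?_⟩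
        apply Nat.le_floor
        have hkey := key (p.2 - p.1) p.1 h11 (by omega)
        rw [show p.1 + (p.2 - p.1) = p.2 by omega] at hkey
        have e1 : (N : ℝ) ^ (-(1 - η)) * (N : ℝ) ^ (1 - η) = 1 := by
          rw [← Real.rpow_add hNpos]; norm_num
        have e2 : (N : ℝ) ^ (1 - η + ε) = (N : ℝ) ^ (1 - η) * (N : ℝ) ^ ε := by
          rw [← Real.rpow_add hNpos]
        have hNe : (0 : ℝ) < (N : ℝ) ^ (1 - η) := Real.rpow_pos_of_pos hNpos _
        rw [hB, le_div_iff₀ hcm]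
        have h3 : (m : ℝ) * (c * ((p.2 - p.1 : ℕ) : ℝ) * (N : ℝ) ^ (-(1 - η)))
            < (N : ℝ) ^ ε := by
          calc (m : ℝ) * (c * ((p.2 - p.1 : ℕ) : ℝ) * (N : ℝ) ^ (-(1 - η)))
              ≤ (m : ℝ) * (x p.2 - x p.1) := by
                apply mul_le_mul_of_nonneg_left hkey (by positivity)
            _ < (N : ℝ) ^ ε := hsm
        have h4 : (m : ℝ) * (c * ((p.2 - p.1 : ℕ) : ℝ) * (N : ℝ) ^ (-(1 - η)))
            * (N : ℝ) ^ (1 - η) < (N : ℝ) ^ ε * (N : ℝ) ^ (1 - η) :=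
          mul_lt_mul_of_pos_right h3 hNe
        have h5 : (m : ℝ) * (c * ((p.2 - p.1 : ℕ) : ℝ) * (N : ℝ) ^ (-(1 - η)))
            * (N : ℝ) ^ (1 - η) = ((p.2 - p.1 : ℕ) : ℝ) * (c * m) := by
          linear_combination ((m : ℝ) * c * ((p.2 - p.1 : ℕ) : ℝ)) * e1
        rw [e2]
        nlinarith [h4, h5]
      · intro p hp q hq hpq
        simp only [coe_filter, Set.mem_setOf_eq, mem_product, mem_Icc] at hp hq
        simp only [Prod.mk.injEq] at hpq
        have h1 : p.1 = q.1 := hpq.1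
        have h2 : p.2 - p.1 = q.2 - q.1 := hpq.2
        have hl1 : p.1 < p.2 := hp.2.1
        have hl2 : q.1 < q.2 := hq.2.1
        exact Prod.ext h1 (by omega)
    calc (((Icc 1 N ×ˢ Icc 1 N).filter _).card : ℝ)
        ≤ ((Icc 1 N ×ˢ Icc 1 (Nat.floor B)).card : ℝ) := by exact_mod_cast hsub
      _ = (N : ℝ) * (Nat.floor B : ℝ) := by
          rw [Finset.card_product]; push_cast [Nat.card_Icc]; ring
      _ ≤ (N : ℝ) * B := by
          apply mul_le_mul_of_nonneg_left (Nat.floor_le hBnn) hNpos.le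
  -- reduce to a sum over m of fiber counts
  have step : ((Icc 1 M ×ˢ (Icc 1 N ×ˢ Icc 1 N)).filter
      (fun t => t.2.1 < t.2.2 ∧ (t.1 : ℝ) * (x t.2.2 - x t.2.1) < (N : ℝ) ^ ε)).card
      ≤ ∑ m ∈ Icc 1 M, ((Icc 1 N ×ˢ Icc 1 N).filter
        (fun p : ℕ × ℕ => p.1 < p.2 ∧ (m : ℝ) * (x p.2 - x p.1) < (N : ℝ) ^ ε)).card := by
    rw [Finset.card_eq_sum_card_fiberwise
      (f := Prod.fst) (t := Icc 1 M)
      (fun t ht => (mem_product.mp (mem_filter.mp ht).1).1)]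
    apply Finset.sum_le_sum
    intro m hm
    apply Finset.card_le_card_of_injOn Prod.snd
    · intro t ht
      simp only [coe_filter, Set.mem_setOf_eq, mem_filter, mem_product] at ht ⊢
      obtain ⟨⟨⟨_, hmem⟩, hp⟩, hfst⟩ := ht
      exact ⟨hmem, hfst ▸ hp⟩
    · intro t ht s hs hts
      simp only [coe_filter, Set.mem_setOf_eq] at ht hs
      exact Prod.ext (ht.2.trans hs.2.symm) hts
  have hsum : (((Icc 1 M ×ˢ (Icc 1 N ×ˢ Icc 1 N)).filter
      (fun t => t.2.1 < t.2.2 ∧ (t.1 : ℝ) * (x t.2.2 - x t.2.1) < (N : ℝ) ^ ε)).card : ℝ)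
      ≤ ∑ m ∈ Icc 1 M, (N : ℝ) * ((N : ℝ) ^ (1 - η + ε) / (c * m)) := by
    calc (((Icc 1 M ×ˢ (Icc 1 N ×ˢ Icc 1 N)).filter _).card : ℝ)
        ≤ (∑ m ∈ Icc 1 M, ((Icc 1 N ×ˢ Icc 1 N).filter
            (fun p : ℕ × ℕ => p.1 < p.2 ∧ (m : ℝ) * (x p.2 - x p.1) < (N : ℝ) ^ ε)).card : ℝ) := by
          exact_mod_cast step
      _ = ∑ m ∈ Icc 1 M, (((Icc 1 N ×ˢ Icc 1 N).filter
            (fun p : ℕ × ℕ => p.1 < p.2 ∧ (m : ℝ) * (x p.2 - x p.1) < (N : ℝ) ^ ε)).card : ℝ) := by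
          push_cast; rfl
      _ ≤ ∑ m ∈ Icc 1 M, (N : ℝ) * ((N : ℝ) ^ (1 - η + ε) / (c * m)) :=
          Finset.sum_le_sum fib
  -- evaluate the sum via the harmonic bound
  have hsum_eq : ∑ m ∈ Icc 1 M, (N : ℝ) * ((N : ℝ) ^ (1 - η + ε) / (c * m))
      = (N : ℝ) * (N : ℝ) ^ (1 - η + ε) / c * ∑ m ∈ Icc 1 M, ((m : ℝ))⁻¹ := by
    rw [Finset.mul_sum]
    apply Finset.sum_congr rfl
    intro m hm
    have hm0 : (m : ℝ) ≠ 0 := by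
      have := (mem_Icc.mp hm).1; positivity
    field_simp
  have hharm_eq : ∑ m ∈ Icc 1 M, ((m : ℝ))⁻¹ = ((harmonic M : ℚ) : ℝ) := by
    rw [harmonic]
    push_cast
    rw [← Finset.Ico_add_one_right_eq_Icc, Finset.sum_Ico_eq_sum_range]
    simp [add_comm]
  have hharm : ∑ m ∈ Icc 1 M, ((m : ℝ))⁻¹ ≤ 1 + Real.log M := by
    rw [hharm_eq]; exact harmonic_le_one_add_log M
  -- log bounds
  have hNε1 : (1 : ℝ) ≤ (N : ℝ) ^ ε := Real.one_le_rpow hN1 hε.le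
  have hM1 : 1 ≤ M := by
    apply Nat.le_floor
    push_cast
    exact Real.one_le_rpow hN1 (by linarith)
  have hMpos : (0 : ℝ) < (M : ℝ) := by exact_mod_cast hM1
  have hlogN : Real.log N ≤ (N : ℝ) ^ ε / ε := by
    have h1 : Real.log ((N : ℝ) ^ ε) = ε * Real.log N := Real.log_rpow hNpos ε
    have h2 : Real.log ((N : ℝ) ^ ε) ≤ (N : ℝ) ^ ε - 1 :=
      Real.log_le_sub_one_of_pos (by positivity)
    rw [le_div_iff₀ hε]
    nlinarith [h1, h2]
  have hlogN0 : 0 ≤ Real.log N := Real.log_nonneg hN1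
  have hlogM : Real.log M ≤ (1 + ε) * Real.log N := by
    have h1 : (M : ℝ) ≤ (N : ℝ) ^ (1 + ε) := Nat.floor_le (by positivity)
    calc Real.log M ≤ Real.log ((N : ℝ) ^ (1 + ε)) :=
          Real.log_le_log hMpos h1
      _ = (1 + ε) * Real.log N := Real.log_rpow hNpos _
  have hlog_total : 1 + Real.log M ≤ (1 + (1 + ε) / ε) * (N : ℝ) ^ ε := by
    have h0 : Real.log N * ε ≤ (N : ℝ) ^ ε := (le_div_iff₀ hε).mp hlogN
    have h2 : (1 + ε) * Real.log N ≤ (1 + ε) / ε * (N : ℝ) ^ ε := by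
      rw [div_mul_eq_mul_div, le_div_iff₀ hε]
      nlinarith [mul_le_mul_of_nonneg_left h0 (by linarith : (0:ℝ) ≤ 1 + ε)]
    nlinarith [hNε1, hlogM, h2]
  -- exponent algebra
  have e3 : (N : ℝ) * (N : ℝ) ^ (1 - η + ε) = (N : ℝ) ^ (2 - η + ε) := by
    rw [show (2 - η + ε) = 1 + (1 - η + ε) by ring,
      Real.rpow_add hNpos 1 (1 - η + ε), Real.rpow_one]
  have e4 : (N : ℝ) ^ (2 - η + ε) * (N : ℝ) ^ ε = (N : ℝ) ^ (2 - η + 2 * ε) := by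
    rw [← Real.rpow_add hNpos]; congr 1; ring
  have hA : (0 : ℝ) ≤ (N : ℝ) ^ (2 - η + ε) / c := by positivity
  calc (((Icc 1 M ×ˢ (Icc 1 N ×ˢ Icc 1 N)).filter _).card : ℝ)
      ≤ (N : ℝ) * (N : ℝ) ^ (1 - η + ε) / c * ∑ m ∈ Icc 1 M, ((m : ℝ))⁻¹ := by
        rw [← hsum_eq]; exact hsum
    _ = (N : ℝ) ^ (2 - η + ε) / c * ∑ m ∈ Icc 1 M, ((m : ℝ))⁻¹ := by rw [e3]
    _ ≤ (N : ℝ) ^ (2 - η + ε) / c * (1 + Real.log M) :=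
        mul_le_mul_of_nonneg_left hharm hA
    _ ≤ (N : ℝ) ^ (2 - η + ε) / c * ((1 + (1 + ε) / ε) * (N : ℝ) ^ ε) :=
        mul_le_mul_of_nonneg_left hlog_total hA
    _ = (1 + (1 + ε) / ε) / c * (N : ℝ) ^ (2 - η + 2 * ε) := by
        rw [← e4]; ring
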